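/- ∫₀^1 log(tan(π(x+1)/4)) dx = 4G/π, where G is Catalan's constant. -/

import Mathlib

open MeasureTheory intervalIntegral Real Set Filter
open scoped Topology

lemma myIntegrableOn_log : IntegrableOn Real.log (Set.Ioc (0:ℝ) 1) := by
  have hg : IntegrableOn (fun t : ℝ => 2 * t ^ (-(1:ℝ)/2)) (Set.Ioc (0:ℝ) 1) := by
    rw [← intervalIntegrable_iff_integrableOn_Ioc_of_le zero_le_one]
    exact (intervalIntegrable_rpow' (by norm_num)).const_mul 2
  refine Integrable.mono' hg Real.measurable_log.aestronglyMeasurable ?_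
  filter_upwards [ae_restrict_mem measurableSet_Ioc] with t ht
  obtain ⟨ht0, ht1⟩ := ht
  have hs : (0:ℝ) < t ^ ((1:ℝ)/2) := Real.rpow_pos_of_pos ht0 _
  have hlog : Real.log t ≤ 0 := Real.log_nonpos ht0.le ht1
  rw [Real.norm_eq_abs, abs_of_nonpos hlog]
  have h1 : Real.log t = 2 * Real.log (t ^ ((1:ℝ)/2)) := by
    rw [Real.log_rpow ht0]; ring
  have h2 : Real.log ((t ^ ((1:ℝ)/2))⁻¹) ≤ (t ^ ((1:ℝ)/2))⁻¹ - 1 :=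
    Real.log_le_sub_one_of_pos (inv_pos.mpr hs)
  rw [Real.log_inv] at h2
  have h3 : t ^ (-(1:ℝ)/2) = (t ^ ((1:ℝ)/2))⁻¹ := by
    rw [show (-(1:ℝ)/2) = -(1/2) by ring, Real.rpow_neg ht0.le]
  rw [h1, h3]
  have hinv : (0:ℝ) < (t ^ ((1:ℝ)/2))⁻¹ := inv_pos.mpr hs
  linarith

lemma myIntegrable_pow_mul_log (m : ℕ) :
    IntervalIntegrable (fun t : ℝ => t ^ m * Real.log t) MeasureTheory.volume 0 1 := by
  rw [intervalIntegrable_iff_integrableOn_Ioc_of_le zero_le_one]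
  refine Integrable.mono' myIntegrableOn_log.abs
    ((measurable_id.pow_const m).mul Real.measurable_log).aestronglyMeasurable ?_
  filter_upwards [ae_restrict_mem measurableSet_Ioc] with t ht
  obtain ⟨ht0, ht1⟩ := ht
  rw [Real.norm_eq_abs, abs_mul]
  have h1 : |t ^ m| ≤ 1 := by
    rw [abs_of_nonneg (pow_nonneg ht0.le m)]
    exact pow_le_one₀ ht0.le ht1
  calc |t ^ m| * |Real.log t| ≤ 1 * |Real.log t| :=
        mul_le_mul_of_nonneg_right h1 (abs_nonneg _)
    _ = |Real.log t| := one_mul _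

lemma myIntegral_pow_mul_log (m : ℕ) :
    ∫ t in (0:ℝ)..1, t ^ m * Real.log t = -(1 / ((m:ℝ) + 1) ^ 2) := by
  have hc : ((m:ℝ) + 1) ≠ 0 := by positivity
  have key := intervalIntegral.integral_eq_sub_of_hasDeriv_right_of_le (a := (0:ℝ)) (b := 1)
    (f := fun t : ℝ => t ^ m * (t * Real.log t) / ((m:ℝ)+1) - t ^ (m+1) / ((m:ℝ)+1) ^ 2)
    (f' := fun t : ℝ => t ^ m * Real.log t) zero_le_one
    (by
      apply Continuous.continuousOn
      exact (((continuous_pow m).mul continuous_mul_log).div_const _).sub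
        ((continuous_pow (m+1)).div_const _))
    (by
      intro x hx
      have hx0 : x ≠ 0 := ne_of_gt hx.1
      have hd : HasDerivAt (fun t : ℝ => t ^ m * (t * Real.log t) / ((m:ℝ)+1) - t ^ (m+1) / ((m:ℝ)+1) ^ 2)
          (((m:ℝ) * x ^ (m-1) * (x * Real.log x) + x ^ m * (Real.log x + 1)) / ((m:ℝ)+1)
            - ((m:ℝ)+1) * x ^ m / ((m:ℝ)+1) ^ 2) x := by
        have h1 := ((hasDerivAt_pow m x).mul (Real.hasDerivAt_mul_log hx0)).div_const ((m:ℝ)+1)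
        have h2 := (hasDerivAt_pow (m+1) x).div_const (((m:ℝ)+1) ^ 2)
        have := h1.sub h2
        simpa [Nat.add_sub_cancel, Pi.sub_def] using this
      have heq : ((m:ℝ) * x ^ (m-1) * (x * Real.log x) + x ^ m * (Real.log x + 1)) / ((m:ℝ)+1)
            - ((m:ℝ)+1) * x ^ m / ((m:ℝ)+1) ^ 2 = x ^ m * Real.log x := by
        have hpow : (m:ℝ) * x ^ (m-1) * (x * Real.log x) = (m:ℝ) * x ^ m * Real.log x := by
          cases m with
          | zero => simp
          | succ k =>
            simp only [Nat.add_sub_cancel]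
            push_cast
            ring
        rw [hpow]
        field_simp
        ring
      rw [heq] at hd
      exact hd.hasDerivWithinAt)
    (myIntegrable_pow_mul_log m)
  rw [key]
  simp [Real.log_one, Real.log_zero]

lemma myCatalan_summable : Summable (fun k : ℕ => (-1:ℝ) ^ k / (1 + 2 * (k:ℝ)) ^ 2) := by
  have hbase : Summable (fun k : ℕ => 1 / ((k:ℝ) + 1) ^ 2) := by
    have := (summable_nat_add_iff 1).mpr (Real.summable_one_div_nat_pow.mpr one_lt_two)
    refine this.congr fun k => ?_
    push_cast
    ring
  apply Summable.of_abs
  refine Summable.of_nonneg_of_le (fun k => abs_nonneg _) (fun k => ?_) hbase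
  have hk : (0:ℝ) < 1 + 2 * (k:ℝ) := by positivity
  rw [abs_div, abs_pow, abs_pow, abs_neg, abs_one, one_pow, abs_of_pos hk]
  have h1 : ((k:ℝ) + 1) ^ 2 ≤ (1 + 2 * (k:ℝ)) ^ 2 := by
    nlinarith [Nat.cast_nonneg (α := ℝ) k]
  have h2 : (0:ℝ) < ((k:ℝ) + 1) ^ 2 := by positivity
  exact one_div_le_one_div_of_le h2 h1

lemma myKey : ∫ t in (0:ℝ)..1, Real.log t / (1 + t ^ 2)
    = -∑' k : ℕ, (-1:ℝ) ^ k / (1 + 2 * (k:ℝ)) ^ 2 := by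
  set μ := MeasureTheory.volume.restrict (Set.Ioc (0:ℝ) 1) with hμ
  set F : ℕ → ℝ → ℝ :=
    fun n t => (∑ k ∈ Finset.range n, (-1:ℝ) ^ k * t ^ (2 * k)) * Real.log t with hF
  have hsum_eq : ∀ (n : ℕ) (t : ℝ),
      ∑ k ∈ Finset.range n, (-1:ℝ) ^ k * t ^ (2 * k) = ∑ k ∈ Finset.range n, (-t ^ 2) ^ k := by
    intro n t
    refine Finset.sum_congr rfl fun k _ => ?_
    rw [pow_mul]
    exact (neg_pow _ _).symm
  have hmeas : ∀ n : ℕ, AEStronglyMeasurable (F n) μ := by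
    intro n
    apply Measurable.aestronglyMeasurable
    exact ((Finset.measurable_sum _ fun k _ =>
      (measurable_const.mul (measurable_id.pow_const (2*k)))).mul Real.measurable_log)
  have hbound_int : MeasureTheory.Integrable (fun t : ℝ => 2 * |Real.log t|) μ :=
    myIntegrableOn_log.abs.const_mul 2
  have h_bound : ∀ n : ℕ, ∀ᵐ t ∂μ, ‖F n t‖ ≤ 2 * |Real.log t| := by
    intro n
    filter_upwards [MeasureTheory.ae_restrict_mem measurableSet_Ioc] with t ht
    obtain ⟨ht0, ht1⟩ := ht
    simp only [hF, Real.norm_eq_abs, abs_mul]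
    have habs : |∑ k ∈ Finset.range n, (-1:ℝ) ^ k * t ^ (2 * k)| ≤ 2 := by
      rw [hsum_eq]
      rw [geom_sum_eq (by nlinarith [sq_nonneg t] : (-t ^ 2 : ℝ) ≠ 1)]
      rw [abs_div]
      have hd : |(-t ^ 2 : ℝ) - 1| = t ^ 2 + 1 := by
        rw [abs_of_nonpos (by nlinarith [sq_nonneg t])]; ring
      have hn : |(-t ^ 2 : ℝ) ^ n - 1| ≤ 2 := by
        have h1 : |(-t ^ 2 : ℝ) ^ n| ≤ 1 := by
          rw [abs_pow]
          apply pow_le_one₀ (abs_nonneg _)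
          rw [abs_neg, abs_of_nonneg (sq_nonneg t)]
          nlinarith
        calc |(-t ^ 2 : ℝ) ^ n - 1| ≤ |(-t ^ 2 : ℝ) ^ n - 0| + |(0:ℝ) - 1| := abs_sub_le _ 0 _
          _ ≤ 1 + 1 := by
              simp only [sub_zero, zero_sub, abs_neg, abs_one]
              linarith
          _ = 2 := by norm_num
      rw [hd, div_le_iff₀ (by positivity)]
      nlinarith [sq_nonneg t]
    exact mul_le_mul_of_nonneg_right habs (abs_nonneg _)
  have h_lim : ∀ᵐ t ∂μ, Filter.Tendsto (fun n => F n t) atTop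
      (𝓝 (Real.log t / (1 + t ^ 2))) := by
    filter_upwards [MeasureTheory.ae_restrict_mem measurableSet_Ioc] with t ht
    obtain ⟨ht0, ht1⟩ := ht
    rcases eq_or_lt_of_le ht1 with h1 | h1
    · rw [h1]
      have hFt : ∀ n, F n (1:ℝ) = 0 := fun n => by simp [hF]
      simp only [hFt, Real.log_one, zero_div]
      exact tendsto_const_nhds
    · have habs : |(-t ^ 2 : ℝ)| < 1 := by
        rw [abs_neg, abs_of_nonneg (sq_nonneg t)]
        nlinarith
      have hgeom := (hasSum_geometric_of_abs_lt_one habs).tendsto_sum_nat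
      have h2 := hgeom.mul_const (Real.log t)
      have heq : (fun n => (∑ k ∈ Finset.range n, (-t ^ 2 : ℝ) ^ k) * Real.log t)
          = fun n => F n t := by
        funext n; simp only [hF]; rw [hsum_eq]
      rw [heq] at h2
      convert h2 using 2
      have : (1 : ℝ) - -t ^ 2 = 1 + t ^ 2 := by ring
      rw [this]
      field_simp
  have hDCT := MeasureTheory.tendsto_integral_of_dominated_convergence
    (fun t : ℝ => 2 * |Real.log t|) hmeas hbound_int h_bound h_lim
  have hInt_eq : ∀ n : ℕ, ∫ t, F n t ∂μ
      = ∑ k ∈ Finset.range n, (-1:ℝ) ^ k * -(1 / (2 * (k:ℝ) + 1) ^ 2) := by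
    intro n
    rw [hμ, ← intervalIntegral.integral_of_le zero_le_one]
    have : ∀ t : ℝ, F n t = ∑ k ∈ Finset.range n, (-1:ℝ) ^ k * (t ^ (2 * k) * Real.log t) := by
      intro t; simp only [hF]; rw [Finset.sum_mul]
      exact Finset.sum_congr rfl fun k _ => by ring
    simp_rw [this]
    rw [intervalIntegral.integral_finset_sum
      (fun k _ => (myIntegrable_pow_mul_log (2 * k)).const_mul _)]
    refine Finset.sum_congr rfl fun k _ => ?_
    rw [intervalIntegral.integral_const_mul, myIntegral_pow_mul_log]
    push_cast
    ring_nf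
  have h_sum_lim : Filter.Tendsto
      (fun n => ∑ k ∈ Finset.range n, (-1:ℝ) ^ k * -(1 / (2 * (k:ℝ) + 1) ^ 2)) atTop
      (𝓝 (-∑' k : ℕ, (-1:ℝ) ^ k / (1 + 2 * (k:ℝ)) ^ 2)) := by
    have h1 := myCatalan_summable.hasSum.tendsto_sum_nat.neg
    simp only [← Finset.sum_neg_distrib] at h1
    exact h1.congr fun n => Finset.sum_congr rfl fun k _ => by ring
  have hfinal : Filter.Tendsto (fun n : ℕ => ∫ t, F n t ∂μ) atTop
      (𝓝 (-∑' k : ℕ, (-1:ℝ) ^ k / (1 + 2 * (k:ℝ)) ^ 2)) := by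
    simp_rw [hInt_eq]
    exact h_sum_lim
  have := tendsto_nhds_unique hDCT hfinal
  rw [← this, intervalIntegral.integral_of_le zero_le_one]

lemma myIntegrableOn_log_tan : IntegrableOn (fun x : ℝ => Real.log (Real.tan (Real.pi / 4 * x)))
    (Set.Icc (0:ℝ) 1) := by
  have hpi := Real.pi_pos
  rw [integrableOn_Icc_iff_integrableOn_Ioc]
  have hbound : MeasureTheory.Integrable
      (fun x : ℝ => |Real.log (Real.pi / 4)| + |Real.log x|)
      (MeasureTheory.volume.restrict (Set.Ioc (0:ℝ) 1)) :=
    (MeasureTheory.integrable_const _).add myIntegrableOn_log.abs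
  refine Integrable.mono' hbound ?_ ?_
  · refine ContinuousOn.aestronglyMeasurable (fun x hx => ?_) measurableSet_Ioc
    have hx0 : 0 < Real.pi / 4 * x := by nlinarith [hx.1]
    have hx2 : Real.pi / 4 * x < Real.pi / 2 := by nlinarith [hx.1, hx.2]
    have hcos : Real.cos (Real.pi / 4 * x) ≠ 0 := by
      apply ne_of_gt
      apply Real.cos_pos_of_mem_Ioo
      constructor <;> nlinarith
    have htan : 0 < Real.tan (Real.pi / 4 * x) := Real.tan_pos_of_pos_of_lt_pi_div_two hx0 hx2
    refine ContinuousAt.continuousWithinAt ?_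
    have h1 : ContinuousAt (fun y : ℝ => Real.pi / 4 * y) x := by fun_prop
    have h2 : ContinuousAt (fun y : ℝ => Real.tan (Real.pi / 4 * y)) x :=
      (Real.continuousAt_tan.mpr hcos).comp h1
    exact h2.log (ne_of_gt htan)
  · filter_upwards [MeasureTheory.ae_restrict_mem measurableSet_Ioc] with x hx
    obtain ⟨hx0, hx1⟩ := hx
    have hq0 : 0 < Real.pi / 4 * x := by nlinarith
    have hq2 : Real.pi / 4 * x < Real.pi / 2 := by nlinarith
    have hq4 : Real.pi / 4 * x ≤ Real.pi / 4 := by nlinarith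
    have htpos : 0 < Real.tan (Real.pi / 4 * x) := Real.tan_pos_of_pos_of_lt_pi_div_two hq0 hq2
    have htle : Real.tan (Real.pi / 4 * x) ≤ 1 := by
      rcases eq_or_lt_of_le hq4 with h | h
      · rw [h, Real.tan_pi_div_four]
      · rw [← Real.tan_pi_div_four]
        exact (Real.tan_lt_tan_of_nonneg_of_lt_pi_div_two hq0.le (by linarith) h).le
    have hlt : Real.pi / 4 * x < Real.tan (Real.pi / 4 * x) := Real.lt_tan hq0 hq2
    have hlog_le : Real.log (Real.tan (Real.pi / 4 * x)) ≤ 0 := Real.log_nonpos htpos.le htle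
    have hlog_ge : Real.log (Real.pi / 4 * x) ≤ Real.log (Real.tan (Real.pi / 4 * x)) :=
      Real.log_le_log hq0 hlt.le
    rw [Real.norm_eq_abs, abs_of_nonpos hlog_le]
    have hsplit : Real.log (Real.pi / 4 * x) = Real.log (Real.pi / 4) + Real.log x :=
      Real.log_mul (by positivity) (ne_of_gt hx0)
    have := abs_nonneg (Real.log (Real.pi / 4))
    have := abs_nonneg (Real.log x)
    have h1 : -Real.log (Real.pi / 4) ≤ |Real.log (Real.pi / 4)| := neg_le_abs _
    have h2 : -Real.log x ≤ |Real.log x| := neg_le_abs _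
    linarith

theorem integral_log_tan_eq_catalan :
    ∫ x in (0:ℝ)..1, Real.log (Real.tan (Real.pi * (x + 1) / 4))
      = 4 * (∑' k : ℕ, (-1 : ℝ) ^ k / (1 + 2 * (k : ℝ)) ^ 2) / Real.pi := by
  have hpi := Real.pi_pos
  set c : ℝ := Real.pi / 4 with hc
  set G : ℝ := ∑' k : ℕ, (-1 : ℝ) ^ k / (1 + 2 * (k : ℝ)) ^ 2 with hG
  have hcos : ∀ x ∈ Set.Icc (0:ℝ) 1, 0 < Real.cos (c * x) := by
    intro x hx
    apply Real.cos_pos_of_mem_Ioo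
    constructor
    · nlinarith [hx.1, hx.2]
    · nlinarith [hx.1, hx.2]
  -- Step 1 : reflection
  have refl1 : ∫ x in (0:ℝ)..1, Real.log (Real.tan (Real.pi * (x + 1) / 4))
      = -∫ x in (0:ℝ)..1, Real.log (Real.tan (c * x)) := by
    have h := intervalIntegral.integral_comp_sub_left (a := (0:ℝ)) (b := 1)
      (fun y => Real.log (Real.tan (Real.pi * (y + 1) / 4))) 1
    norm_num at h
    rw [← h]
    have : ∀ x : ℝ, Real.log (Real.tan (Real.pi * ((1 - x) + 1) / 4))
        = -Real.log (Real.tan (c * x)) := by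
      intro x
      have harg : Real.pi * ((1 - x) + 1) / 4 = Real.pi / 2 - c * x := by
        rw [hc]; ring
      rw [harg, Real.tan_pi_div_two_sub, Real.log_inv]
    simp_rw [this]
    rw [intervalIntegral.integral_neg]
  -- Step 2 : substitution t = tan (c x)
  have hsubst : ∫ x in (0:ℝ)..1,
        ((1 / Real.cos (c * x) ^ 2) * c) • ((fun t => Real.log t / (1 + t ^ 2))
          ∘ (fun x => Real.tan (c * x))) x
      = ∫ u in Real.tan (c * 0)..Real.tan (c * 1), Real.log u / (1 + u ^ 2) := by
    apply intervalIntegral.integral_comp_smul_deriv'''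
    · intro x hx
      rw [Set.uIcc_of_le zero_le_one] at hx
      exact ((Real.continuousAt_tan.mpr (ne_of_gt (hcos x hx))).comp
        ((continuous_const.mul continuous_id).continuousAt)).continuousWithinAt
    · intro x hx
      simp only [min_eq_left zero_le_one, max_eq_right zero_le_one] at hx
      have hcx : Real.cos (c * x) ≠ 0 := ne_of_gt (hcos x (Set.Ioo_subset_Icc_self hx))
      have hlin : HasDerivAt (fun x : ℝ => c * x) c x := by
        simpa using (hasDerivAt_id x).const_mul c
      exact ((Real.hasDerivAt_tan hcx).comp x hlin).hasDerivWithinAt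
    · simp only [min_eq_left zero_le_one, max_eq_right zero_le_one]
      have himg : (fun x => Real.tan (c * x)) '' Set.Ioo 0 1 ⊆ Set.Ioi (0:ℝ) := by
        rintro _ ⟨x, hx, rfl⟩
        exact Real.tan_pos_of_pos_of_lt_pi_div_two (by nlinarith [hx.1])
          (by nlinarith [hx.1, hx.2])
      refine ContinuousOn.mono ?_ himg
      intro t ht
      exact ((Real.continuousAt_log (ne_of_gt ht)).div
        (by fun_prop) (by positivity)).continuousWithinAt
    · have himg : (fun x => Real.tan (c * x)) '' Set.uIcc 0 1 ⊆ Set.Icc (0:ℝ) 1 := by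
        rw [Set.uIcc_of_le zero_le_one]
        rintro _ ⟨x, hx, rfl⟩
        have hq0 : 0 ≤ c * x := by nlinarith [hx.1]
        have hq4 : c * x ≤ Real.pi / 4 := by nlinarith [hx.2]
        constructor
        · exact Real.tan_nonneg_of_nonneg_of_le_pi_div_two hq0 (by nlinarith)
        · show Real.tan (c * x) ≤ 1
          rcases eq_or_lt_of_le hq4 with h | h
          · rw [h, Real.tan_pi_div_four]
          · rw [← Real.tan_pi_div_four]
            exact (Real.tan_lt_tan_of_nonneg_of_lt_pi_div_two hq0 (by linarith) h).le
      refine MeasureTheory.IntegrableOn.mono_set ?_ himg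
      rw [integrableOn_Icc_iff_integrableOn_Ioc]
      refine Integrable.mono' myIntegrableOn_log.abs
        ((Real.measurable_log.div ((measurable_const.add
          (measurable_id.pow_const 2))) ).aestronglyMeasurable) ?_
      filter_upwards [MeasureTheory.ae_restrict_mem measurableSet_Ioc] with t ht
      rw [Real.norm_eq_abs, abs_div]
      have h1 : (1:ℝ) ≤ |1 + t ^ 2| := by
        rw [abs_of_pos (by positivity)]; nlinarith [sq_nonneg t]
      calc |Real.log t| / |1 + t ^ 2| ≤ |Real.log t| / 1 := by
            apply div_le_div_of_nonneg_left ?_ ?_ h1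
            · exact abs_nonneg _
            · norm_num
        _ = |Real.log t| := div_one _
    · refine MeasureTheory.IntegrableOn.congr_fun
        ((myIntegrableOn_log_tan.mono_set
          (Set.uIcc_of_le zero_le_one).subset).const_mul c) ?_ measurableSet_uIcc
      intro x hx
      rw [Set.uIcc_of_le zero_le_one] at hx
      have hcx := hcos x hx
      have hcx2 : Real.cos (c * x) ^ 2 ≠ 0 := by positivity
      simp only [Function.comp, smul_eq_mul]
      rw [div_eq_mul_inv (Real.log (Real.tan (c * x))),
        Real.inv_one_add_tan_sq (ne_of_gt hcx)]
      field_simp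
      rw [hc]; ring_nf
  -- identify the left side of hsubst
  have heqOn : ∀ x ∈ Set.uIcc (0:ℝ) 1,
      ((1 / Real.cos (c * x) ^ 2) * c) • ((fun t => Real.log t / (1 + t ^ 2))
          ∘ (fun x => Real.tan (c * x))) x
        = c * Real.log (Real.tan (c * x)) := by
    intro x hx
    rw [Set.uIcc_of_le zero_le_one] at hx
    have hcx := hcos x hx
    have hcx2 : Real.cos (c * x) ^ 2 ≠ 0 := by positivity
    simp only [Function.comp, smul_eq_mul]
    rw [div_eq_mul_inv (Real.log (Real.tan (c * x))),
      Real.inv_one_add_tan_sq (ne_of_gt hcx)]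
    field_simp
  rw [intervalIntegral.integral_congr heqOn] at hsubst
  rw [intervalIntegral.integral_const_mul] at hsubst
  have hends : Real.tan (c * 0) = 0 ∧ Real.tan (c * 1) = 1 := by
    constructor
    · rw [mul_zero, Real.tan_zero]
    · rw [mul_one, hc, Real.tan_pi_div_four]
  rw [hends.1, hends.2, myKey] at hsubst
  -- hsubst : c * ∫ x in 0..1, log (tan (c x)) = -G
  rw [refl1]
  have hπ : Real.pi ≠ 0 := ne_of_gt hpi
  have hcne : c ≠ 0 := by rw [hc]; positivity
  have hJ : (∫ x in (0:ℝ)..1, Real.log (Real.tan (c * x))) = -G / c := by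
    rw [eq_div_iff hcne]
    linear_combination hsubst
  rw [hJ, hc]
  field_simp
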